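/- Conversely, if a nonnegative adapted process X satisfies X_k = ψ_k(X_{k+1}) for k < K and X_K = ψ_K·A_K for a PHPP ψ, then X_k = Z_k·A_k where Z_K = ψ_K and Z_{k-1} = ψ_{k-1}(Z_k·S_k)/(S_{k-1} + ψ_{k-1}(Z_k·S_k)); i.e., the process with a given PHPP is unique. -/

import Mathlib

open MeasureTheory Finset

/-- uniqueness: any nonnegative adapted process with the PHPP `ψ`
satisfies `X_k = Z_k·A_k` with `Z` given by the backward recursion. -/
theorem PHPP_uniqueness
    {Ω : Type*} {m : MeasurableSpace Ω} (K : ℕ) (ℱ : Filtration ℕ m)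
    (S A : ℕ → Ω → ℝ) (X Z : ℕ → Ω → ℝ)
    (hSadapted : ∀ k : ℕ, Measurable[ℱ k] (S k))
    (hSpos : ∀ k ω, 0 < S k ω)
    (ψ : ℕ → (Ω → ℝ) → (Ω → ℝ)) (ψK : Ω → ℝ)
    (hψmeas : ∀ k < K, ∀ f : Ω → ℝ, Measurable[ℱ (k + 1)] f → Measurable[ℱ k] (ψ k f))
    (hψpos : ∀ k < K, ∀ f : Ω → ℝ, (∀ ω, 0 ≤ f ω) → ∀ ω, 0 ≤ ψ k f ω)
    (hψneg : ∀ k < K, ∀ f : Ω → ℝ, (∀ ω, f ω ≤ 0) → ∀ ω, ψ k f ω ≤ 0)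
    (hψhom : ∀ k < K, ∀ f g : Ω → ℝ, Measurable[ℱ (k + 1)] f → Measurable[ℱ k] g →
      (∀ ω, 0 ≤ g ω) → ψ k (fun ω => g ω * f ω) = fun ω => g ω * ψ k f ω)
    (hψKmeas : Measurable[ℱ K] ψK) (hψK01 : ∀ ω, 0 ≤ ψK ω ∧ ψK ω ≤ 1)
    -- backward recursion for the relative rates
    (hZK : Z K = ψK)
    (hZrec : ∀ k < K, ∀ ω, Z k ω =
      ψ k (fun ω' => Z (k + 1) ω' * S (k + 1) ω') ω /
        (S k ω + ψ k (fun ω' => Z (k + 1) ω' * S (k + 1) ω') ω))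
    -- X nonnegative adapted with the PHPP
    (hXadapted : ∀ k : ℕ, Measurable[ℱ k] (X k))
    (hXnonneg : ∀ k ≤ K, ∀ ω, 0 ≤ X k ω)
    (hA0 : ∀ ω, A 0 ω = S 0 ω)
    (hArec : ∀ k < K, ∀ ω, A (k + 1) ω = (A k ω - X k ω) * S (k + 1) ω / S k ω)
    (hproj : ∀ k < K, X k = ψ k (X (k + 1)))
    (hfinal : ∀ ω, X K ω = ψK ω * A K ω) :
    ∀ k ≤ K, ∀ ω, X k ω = Z k ω * A k ω := by

  -- ψ k of the zero function is zero
  have hψ0 : ∀ k < K, ∀ ω, ψ k (fun _ => (0:ℝ)) ω = 0 := by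
    intro k hk ω
    exact le_antisymm (hψneg k hk _ (fun _ => le_refl 0) ω)
      (hψpos k hk _ (fun _ => le_refl 0) ω)
  -- Z is adapted and nonnegative
  have hZaux : ∀ d k, k + d = K → Measurable[ℱ k] (Z k) ∧ ∀ ω, 0 ≤ Z k ω := by
    intro d
    induction d with
    | zero =>
      intro k hk
      have : k = K := by omega
      subst this
      rw [hZK]
      exact ⟨hψKmeas, fun ω => (hψK01 ω).1⟩
    | succ d ih =>
      intro k hk
      have hkK : k < K := by omega
      obtain ⟨ihm, ihn⟩ := ih (k+1) (by omega)
      have hZSm : Measurable[ℱ (k+1)] (fun ω' => Z (k+1) ω' * S (k+1) ω') :=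
        ihm.mul (hSadapted (k+1))
      have hZSn : ∀ ω', 0 ≤ Z (k+1) ω' * S (k+1) ω' :=
        fun ω' => mul_nonneg (ihn ω') (hSpos (k+1) ω').le
      have hcm : Measurable[ℱ k] (ψ k (fun ω' => Z (k+1) ω' * S (k+1) ω')) :=
        hψmeas k hkK _ hZSm
      have hcn : ∀ ω, 0 ≤ ψ k (fun ω' => Z (k+1) ω' * S (k+1) ω') ω :=
        hψpos k hkK _ hZSn
      have hZeq : Z k = fun ω => ψ k (fun ω' => Z (k+1) ω' * S (k+1) ω') ω /
          (S k ω + ψ k (fun ω' => Z (k+1) ω' * S (k+1) ω') ω) :=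
        funext fun ω => hZrec k hkK ω
      constructor
      · rw [hZeq]
        exact hcm.div ((hSadapted k).add hcm)
      · intro ω
        rw [hZrec k hkK ω]
        exact div_nonneg (hcn ω) (add_nonneg (hSpos k ω).le (hcn ω))
  have hZ : ∀ k ≤ K, Measurable[ℱ k] (Z k) ∧ ∀ ω, 0 ≤ Z k ω :=
    fun k hk => hZaux (K - k) k (by omega)
  -- A is adapted
  have hA : ∀ k ≤ K, Measurable[ℱ k] (A k) := by
    intro k
    induction k with
    | zero =>
      intro _
      have : A 0 = S 0 := funext hA0
      rw [this]; exact hSadapted 0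
    | succ k ih =>
      intro hk
      have hk' : k < K := by omega
      have hAk : Measurable[ℱ (k+1)] (A k) :=
        (ih (by omega)).mono (ℱ.mono (Nat.le_succ k)) le_rfl
      have hXk : Measurable[ℱ (k+1)] (X k) :=
        (hXadapted k).mono (ℱ.mono (Nat.le_succ k)) le_rfl
      have hSk : Measurable[ℱ (k+1)] (S k) :=
        (hSadapted k).mono (ℱ.mono (Nat.le_succ k)) le_rfl
      have : A (k+1) = fun ω => (A k ω - X k ω) * S (k+1) ω / S k ω :=
        funext fun ω => hArec k hk' ω
      rw [this]
      exact ((hAk.sub hXk).mul (hSadapted (k+1))).div hSk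
  -- main backward induction
  have main : ∀ d k, k + d = K → ∀ ω, X k ω = Z k ω * A k ω := by
    intro d
    induction d with
    | zero =>
      intro k hk ω
      have : k = K := by omega
      subst this
      rw [hfinal ω, hZK]
    | succ d ih =>
      intro k hk ω
      have hkK : k < K := by omega
      have hkK' : k ≤ K := hkK.le
      have hk1K : k + 1 ≤ K := hkK
      have IH : ∀ ω', X (k+1) ω' = Z (k+1) ω' * A (k+1) ω' := ih (k+1) (by omega)
      obtain ⟨hZm1, hZn1⟩ := hZ (k+1) hk1K
      -- notation
      set c : Ω → ℝ := ψ k (fun ω' => Z (k+1) ω' * S (k+1) ω') with hc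
      have hZSm : Measurable[ℱ (k+1)] (fun ω' => Z (k+1) ω' * S (k+1) ω') :=
        hZm1.mul (hSadapted (k+1))
      have hZSn : ∀ ω', 0 ≤ Z (k+1) ω' * S (k+1) ω' :=
        fun ω' => mul_nonneg (hZn1 ω') (hSpos (k+1) ω').le
      have hcn : ∀ ω', 0 ≤ c ω' := hψpos k hkK _ hZSn
      -- X (k+1) written in terms of time-k data
      have hX1 : ∀ ω', X (k+1) ω' =
          ((A k ω' - X k ω') / S k ω') * (Z (k+1) ω' * S (k+1) ω') := by
        intro ω'
        have hS := (hSpos k ω').ne'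
        rw [IH ω', hArec k hkK ω']
        field_simp
      have hAkm : Measurable[ℱ k] (A k) := hA k hkK'
      -- the nonnegative part multiplier
      set gp : Ω → ℝ := fun ω' => max ((A k ω' - X k ω') / S k ω') 0 with hgp
      have hgpm : Measurable[ℱ k] gp :=
        ((hAkm.sub (hXadapted k)).div (hSadapted k)).max measurable_const
      have hgpn : ∀ ω', 0 ≤ gp ω' := fun ω' => le_max_right _ _
      -- indicator of the negative part
      set e' : Ω → ℝ := fun ω' => if 0 ≤ A k ω' - X k ω' then (0:ℝ) else 1 with he'
      have he'm : Measurable[ℱ k] e' := by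
        exact Measurable.ite (measurableSet_le measurable_const
          (hAkm.sub (hXadapted k))) measurable_const measurable_const
      have he'n : ∀ ω', 0 ≤ e' ω' := by
        intro ω'; simp only [he']; split <;> norm_num
      -- Equation 1:  gp * c = e * X k  (in the form below)
      have E1 : ∀ ω', (if 0 ≤ A k ω' - X k ω' then (1:ℝ) else 0) * X k ω'
          = gp ω' * c ω' := by
        have h1 := hψhom k hkK (X (k+1))
          (fun ω' => if 0 ≤ A k ω' - X k ω' then (1:ℝ) else 0)
          (hXadapted (k+1))
          (Measurable.ite (measurableSet_le measurable_const
            (hAkm.sub (hXadapted k))) measurable_const measurable_const)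
          (by intro ω'; by_cases h : 0 ≤ A k ω' - X k ω' <;> simp [h])
        have h2 := hψhom k hkK (fun ω' => Z (k+1) ω' * S (k+1) ω') gp hZSm hgpm hgpn
        have h3 : (fun ω' => (if 0 ≤ A k ω' - X k ω' then (1:ℝ) else 0) * X (k+1) ω')
            = fun ω' => gp ω' * (Z (k+1) ω' * S (k+1) ω') := by
          funext ω'
          by_cases h : 0 ≤ A k ω' - X k ω'
          · have hmax : gp ω' = (A k ω' - X k ω') / S k ω' := by
              simp only [hgp]
              exact max_eq_left (div_nonneg h (hSpos k ω').le)
            simp only [h, if_pos, hmax, one_mul, hX1 ω']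
          · have hmax : gp ω' = 0 := by
              simp only [hgp]
              exact max_eq_right (le_of_lt (div_neg_of_neg_of_pos (not_le.mp h) (hSpos k ω')))
            simp [h, hmax]
        intro ω'
        have := congrFun (h1.symm.trans (by rw [h3, h2])) ω'
        simpa [← hproj k hkK, hc] using this
      -- Equation 2: e' * X k ≤ 0 pointwise
      have E2 : ∀ ω', e' ω' * X k ω' ≤ 0 := by
        have h1 := hψhom k hkK (X (k+1)) e' (hXadapted (k+1)) he'm he'n
        intro ω'
        have hle : ∀ ω'', e' ω'' * X (k+1) ω'' ≤ 0 := by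
          intro ω''
          simp only [he']
          by_cases h : 0 ≤ A k ω'' - X k ω''
          · simp [h]
          · rw [if_neg h, one_mul, hX1 ω'']
            exact mul_nonpos_of_nonpos_of_nonneg
              (le_of_lt (div_neg_of_neg_of_pos (not_le.mp h) (hSpos k ω''))) (hZSn ω'')
        have := hψneg k hkK _ hle ω'
        rw [h1] at this
        rw [← hproj k hkK] at this
        exact this
      -- on the negative set, X k = 0
      have hXzero : ∀ ω', ¬ 0 ≤ A k ω' - X k ω' → X k ω' = 0 := by
        intro ω' h
        have h1 := E2 ω'
        simp only [he', if_neg h, one_mul] at h1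
        exact le_antisymm h1 (hXnonneg k hkK' ω')
      -- on the negative set, Z (k+1) = 0
      have hZzero : ∀ ω', ¬ 0 ≤ A k ω' - X k ω' → Z (k+1) ω' = 0 := by
        intro ω' h
        have hX0 := hXzero ω' h
        have hAneg : A (k+1) ω' < 0 := by
          rw [hArec k hkK ω']
          exact div_neg_of_neg_of_pos
            (mul_neg_of_neg_of_pos (not_le.mp h) (hSpos (k+1) ω')) (hSpos k ω')
        have hX1n : 0 ≤ Z (k+1) ω' * A (k+1) ω' := by
          rw [← IH ω']; exact hXnonneg (k+1) hk1K ω'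
        by_contra hne
        have hpos : 0 < Z (k+1) ω' := lt_of_le_of_ne (hZn1 ω') (Ne.symm hne)
        nlinarith
      -- Equation 3: e' * c = 0
      have E3 : ∀ ω', e' ω' * c ω' = 0 := by
        have h2 := hψhom k hkK (fun ω' => Z (k+1) ω' * S (k+1) ω') e' hZSm he'm he'n
        have h3 : (fun ω' => e' ω' * (Z (k+1) ω' * S (k+1) ω')) = fun _ => (0:ℝ) := by
          funext ω'
          by_cases h : 0 ≤ A k ω' - X k ω'
          · simp only [he']
            rw [if_pos h, zero_mul]
          · rw [hZzero ω' h]; ring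
        intro ω'
        have := congrFun (h2.symm.trans (by rw [h3])) ω'
        rw [this, hψ0 k hkK ω']
      -- conclude
      by_cases h : 0 ≤ A k ω - X k ω
      · have hE := E1 ω
        rw [if_pos h, one_mul] at hE
        have hmax : gp ω = (A k ω - X k ω) / S k ω := by
          simp only [hgp]
          exact max_eq_left (div_nonneg h (hSpos k ω).le)
        rw [hmax] at hE
        have hS := (hSpos k ω).ne'
        have hSc : S k ω + c ω ≠ 0 := by
          have := hcn ω; have := hSpos k ω; positivity
        have h1 : X k ω * S k ω = (A k ω - X k ω) * c ω := by
          calc X k ω * S k ω = (A k ω - X k ω) / S k ω * c ω * S k ω := by rw [← hE]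
          _ = (A k ω - X k ω) * c ω := by field_simp
        rw [hZrec k hkK ω, ← hc, div_mul_eq_mul_div, eq_div_iff hSc]
        linear_combination h1
      · have hc0 : c ω = 0 := by
          have := E3 ω
          simp only [he', if_neg h, one_mul] at this
          exact this
        rw [hXzero ω h, hZrec k hkK ω, ← hc, hc0]
        simp
  intro k hk ω
  exact main (K - k) k (by omega) ω
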